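/- Suppose p > 0, x > 2p, and 0 ≤ u ≤ a·(x - 2p). Then P(A·|C·p - x| ≤ u) = 1/2 + (u/(4·a·p))·ln( x/(x - 2p) ). -/

import Mathlib

open MeasureTheory ProbabilityTheory
open scoped ENNReal

noncomputable def uniformMeasure (s t : ℝ) : Measure ℝ :=
  (ENNReal.ofReal (t - s))⁻¹ • volume.restrict (Set.Icc s t)

lemma unif_Iic {a t : ℝ} (ha : 0 < a) (ht2 : t ≤ a) :
    uniformMeasure (-a) a (Set.Iic t) = ENNReal.ofReal ((t + a)/(2*a)) := by
  have h2a : (0:ℝ) < 2*a := by linarith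
  rw [uniformMeasure, Measure.smul_apply, Measure.restrict_apply measurableSet_Iic]
  have : Set.Iic t ∩ Set.Icc (-a) a = Set.Icc (-a) t := by
    ext y; simp only [Set.mem_inter_iff, Set.mem_Iic, Set.mem_Icc]
    constructor
    · rintro ⟨h1, h2, h3⟩; exact ⟨h2, h1⟩
    · rintro ⟨h1, h2⟩; exact ⟨h2, h1, le_trans h2 ht2⟩
  rw [this, Real.volume_Icc, ENNReal.ofReal_div_of_pos h2a, smul_eq_mul,
    ENNReal.div_eq_inv_mul]
  congr 2 <;> ring

theorem gwo_cdf_case2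
    {Ω : Type*} [MeasurableSpace Ω] (P : Measure Ω) [IsProbabilityMeasure P]
    (a p x : ℝ) (ha : 0 < a) (A C : Ω → ℝ) (hA : Measurable A) (hC : Measurable C)
    (hInd : IndepFun A C P)
    (hAlaw : Measure.map A P = uniformMeasure (-a) a)
    (hClaw : Measure.map C P = uniformMeasure 0 2)
    (u : ℝ) (hp : 0 < p) (hx : 2 * p < x) (hu1 : 0 ≤ u) (hu2 : u ≤ a * (x - 2 * p)) :
    (P {ω | A ω * |C ω * p - x| ≤ u}).toReal
      = 1 / 2 + (u / (4 * a * p)) * Real.log (x / (x - 2 * p)) := by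
  have hprod : P.map (fun ω => (C ω, A ω))
      = (uniformMeasure 0 2).prod (uniformMeasure (-a) a) := by
    rw [← hClaw, ← hAlaw]
    exact (indepFun_iff_map_prod_eq_prod_map_map hC.aemeasurable hA.aemeasurable).mp hInd.symm
  set S : Set (ℝ × ℝ) := {q : ℝ × ℝ | q.2 * |q.1 * p - x| ≤ u} with hS
  have hSm : MeasurableSet S := by
    apply measurableSet_le
    · exact (measurable_snd.mul ((measurable_fst.mul_const p).sub measurable_const).abs)
    · exact measurable_const
  have hev : {ω | A ω * |C ω * p - x| ≤ u} = (fun ω => (C ω, A ω)) ⁻¹' S := rfl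
  haveI : SFinite (uniformMeasure (-a) a) := by unfold uniformMeasure; infer_instance
  have hmeas : (P {ω | A ω * |C ω * p - x| ≤ u})
      = ∫⁻ c, uniformMeasure (-a) a (Prod.mk c ⁻¹' S) ∂(uniformMeasure 0 2) := by
    rw [hev, ← Measure.map_apply (hC.prodMk hA) hSm, hprod, Measure.prod_apply hSm]
  -- pointwise computation of sections
  set g : ℝ → ℝ := fun c => (u/(x - c*p) + a)/(2*a) with hg
  have hsec : ∀ c ∈ Set.Icc (0:ℝ) 2,
      uniformMeasure (-a) a (Prod.mk c ⁻¹' S) = ENNReal.ofReal (g c) := by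
    intro c hc
    obtain ⟨hc0, hc2⟩ := hc
    have hxc : 0 < x - c*p := by nlinarith
    have habs : |c * p - x| = x - c*p := by
      rw [abs_sub_comm, abs_of_pos hxc]
    have hset : Prod.mk c ⁻¹' S = Set.Iic (u/(x - c*p)) := by
      ext α
      simp only [S, Set.mem_preimage, Set.mem_setOf_eq, Set.mem_Iic, habs]
      rw [le_div_iff₀ hxc]
    have ht2 : u/(x - c*p) ≤ a := by
      rw [div_le_iff₀ hxc]
      nlinarith [mul_nonneg (mul_nonneg ha.le hp.le) (by linarith : (0:ℝ) ≤ 2 - c)]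
    rw [hset, unif_Iic ha ht2]
  have hlint : ∫⁻ c, uniformMeasure (-a) a (Prod.mk c ⁻¹' S) ∂(uniformMeasure 0 2)
      = (ENNReal.ofReal 2)⁻¹ * ∫⁻ c in Set.Icc (0:ℝ) 2, ENNReal.ofReal (g c) := by
    rw [uniformMeasure, lintegral_smul_measure]
    norm_num
    congr 1
    exact setLIntegral_congr_fun measurableSet_Icc hsec
  -- convert to real integral
  have hcont : ContinuousOn g (Set.Icc (0:ℝ) 2) := by
    apply ContinuousOn.div_const
    apply ContinuousOn.add _ continuousOn_const
    apply ContinuousOn.div continuousOn_const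
    · exact (continuous_const.sub (continuous_id.mul continuous_const)).continuousOn
    · intro c hc
      obtain ⟨hc0, hc2⟩ := hc
      nlinarith
  have hint : IntegrableOn g (Set.Icc (0:ℝ) 2) := hcont.integrableOn_Icc
  have hpos : 0 ≤ᶠ[ae (volume.restrict (Set.Icc (0:ℝ) 2))] g := by
    rw [Filter.EventuallyLE, ae_restrict_iff' measurableSet_Icc]
    apply Filter.Eventually.of_forall
    intro c hc
    obtain ⟨hc0, hc2⟩ := hc
    have hxc : 0 < x - c*p := by nlinarith
    have : 0 ≤ u/(x - c*p) := div_nonneg hu1 hxc.le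
    have : 0 ≤ u/(x - c*p) + a := by linarith
    positivity
  have hofReal : ∫⁻ c in Set.Icc (0:ℝ) 2, ENNReal.ofReal (g c)
      = ENNReal.ofReal (∫ c in Set.Icc (0:ℝ) 2, g c) :=
    (ofReal_integral_eq_lintegral_ofReal hint hpos).symm
  -- compute the real integral via FTC
  have hx0 : (0:ℝ) < x := by nlinarith
  have hx2 : (0:ℝ) < x - 2*p := by linarith
  have hFTC : ∫ c in (0:ℝ)..2, (u/(x - c*p) + a)
      = (u/p) * Real.log (x/(x - 2*p)) + 2*a := by
    have hderiv : ∀ c ∈ Set.uIcc (0:ℝ) 2,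
        HasDerivAt (fun c => (-(u/p)) * Real.log (x - c*p) + a*c) (u/(x - c*p) + a) c := by
      intro c hc
      rw [Set.uIcc_of_le (by norm_num : (0:ℝ) ≤ 2)] at hc
      obtain ⟨hc0, hc2⟩ := hc
      have hxc : 0 < x - c*p := by nlinarith
      have h1 : HasDerivAt (fun c : ℝ => x - c*p) (-p) c := by
        simpa using (hasDerivAt_id c).mul_const p |>.const_sub x
      have h2 : HasDerivAt (fun c : ℝ => Real.log (x - c*p)) ((-p)/(x - c*p)) c :=
        h1.log hxc.ne'
      have h3 := (h2.const_mul (-(u/p))).add ((hasDerivAt_id c).const_mul a)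
      convert h3 using 1
      · rfl
      · rfl
      · rfl
      have hp0 : p ≠ 0 := hp.ne'
      field_simp
    have hcont' : IntervalIntegrable (fun c => u/(x - c*p) + a) volume 0 2 := by
      apply ContinuousOn.intervalIntegrable
      rw [Set.uIcc_of_le (by norm_num : (0:ℝ) ≤ 2)]
      apply ContinuousOn.add _ continuousOn_const
      apply ContinuousOn.div continuousOn_const
      · exact (continuous_const.sub (continuous_id.mul continuous_const)).continuousOn
      · intro c hc; obtain ⟨hc0, hc2⟩ := hc; nlinarith
    rw [intervalIntegral.integral_eq_sub_of_hasDerivAt hderiv hcont']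
    have hlog : Real.log (x/(x - 2*p)) = Real.log x - Real.log (x - 2*p) :=
      Real.log_div hx0.ne' hx2.ne'
    rw [hlog]
    norm_num
    ring
  have hreal : ∫ c in Set.Icc (0:ℝ) 2, g c
      = ((u/p) * Real.log (x/(x - 2*p)) + 2*a)/(2*a) := by
    rw [integral_Icc_eq_integral_Ioc, ← intervalIntegral.integral_of_le (by norm_num : (0:ℝ) ≤ 2)]
    simp only [hg]
    rw [intervalIntegral.integral_div, hFTC]
  -- put it all together
  rw [hmeas, hlint, hofReal, hreal]
  have hnum : 0 ≤ ((u/p) * Real.log (x/(x - 2*p)) + 2*a)/(2*a) := by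
    have : 0 ≤ Real.log (x/(x - 2*p)) := by
      apply Real.log_nonneg
      rw [le_div_iff₀ hx2]; nlinarith
    positivity
  rw [ENNReal.toReal_mul, ENNReal.toReal_inv, ENNReal.toReal_ofReal (by norm_num),
    ENNReal.toReal_ofReal hnum]
  field_simp
  ring
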